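/- For a prime power q and integers t ≥ 1, n ≥ 2t+1: Σ_{k=t+1}^{⌊n/2⌋} C_q(n−k+t, t) / C_q(n,t) < 1/(q^t − 1). In other words, the tail sum of ratios of Gaussian binomial coefficients is bounded by the geometric series bound 1/(q^t−1). -/

import Mathlib

/-- The Gaussian binomial coefficient, via the `q`-Pascal recursion. -/
def gauss (q : ℕ) : ℕ → ℕ → ℕ
  | _, 0 => 1
  | 0, _ + 1 => 0
  | n + 1, k + 1 => gauss q n k + q ^ (k + 1) * gauss q n (k + 1)

lemma gauss_pos (q : ℕ) : ∀ n k, k ≤ n → 0 < gauss q n k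
  | n, 0, _ => by cases n <;> simp [gauss]
  | n + 1, k + 1, h => by
    have h1 : 0 < gauss q n k := gauss_pos q n k (Nat.succ_le_succ_iff.mp h)
    show 0 < gauss q n k + q ^ (k + 1) * gauss q n (k + 1)
    omega

lemma gauss_mul_le (q t : ℕ) (ht : 1 ≤ t) :
    ∀ d m, t ≤ m → q ^ (t * d) * gauss q m t ≤ gauss q (m + d) t
  | 0, m, _ => by simp
  | d + 1, m, h => by
    have ih := gauss_mul_le q t ht d m h
    obtain ⟨t', rfl⟩ : ∃ t', t = t' + 1 := ⟨t - 1, by omega⟩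
    have hrec : gauss q (m + d + 1) (t' + 1)
        = gauss q (m + d) t' + q ^ (t' + 1) * gauss q (m + d) (t' + 1) := rfl
    calc q ^ ((t' + 1) * (d + 1)) * gauss q m (t' + 1)
        = q ^ (t' + 1) * (q ^ ((t' + 1) * d) * gauss q m (t' + 1)) := by
          rw [show (t' + 1) * (d + 1) = (t' + 1) + (t' + 1) * d by ring, pow_add, mul_assoc]
      _ ≤ q ^ (t' + 1) * gauss q (m + d) (t' + 1) := Nat.mul_le_mul_left _ ih
      _ ≤ gauss q (m + (d + 1)) (t' + 1) := by
          rw [show m + (d + 1) = (m + d) + 1 from rfl, hrec]; omega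

/-- for a prime power `q`, `t ≥ 1` and `n ≥ 2t+1`,
`Σ_{k=t+1}^{⌊n/2⌋} C_q(n−k+t,t)/C_q(n,t) < 1/(q^t − 1)`. -/
theorem tail_sum_bound (q t n : ℕ) (hq : IsPrimePow q) (ht : 1 ≤ t)
    (hn : 2 * t + 1 ≤ n) :
    ∑ k ∈ Finset.Icc (t + 1) (n / 2),
        (gauss q (n - k + t) t : ℚ) / (gauss q n t : ℚ)
      < 1 / ((q : ℚ) ^ t - 1) := by
  have hq2 : 2 ≤ q := hq.two_le
  have hq1 : (1 : ℚ) < (q : ℚ) := by exact_mod_cast hq2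
  have hQ : (1 : ℚ) < (q : ℚ) ^ t := one_lt_pow₀ hq1 (by omega)
  set x : ℚ := ((q : ℚ) ^ t)⁻¹ with hxdef
  have hx0 : (0 : ℚ) < x := by positivity
  have hx1 : x < 1 := inv_lt_one_of_one_lt₀ hQ
  have step : ∀ k ∈ Finset.Icc (t + 1) (n / 2),
      (gauss q (n - k + t) t : ℚ) / (gauss q n t : ℚ) ≤ x ^ (k - t) := by
    intro k hk
    rw [Finset.mem_Icc] at hk
    have hk2 : k ≤ n := le_trans hk.2 (Nat.div_le_self _ _)
    have key := gauss_mul_le q t ht (k - t) (n - k + t) (Nat.le_add_left _ _)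
    rw [show n - k + t + (k - t) = n by omega] at key
    have hgn : (0 : ℚ) < (gauss q n t : ℚ) := by
      exact_mod_cast gauss_pos q n t (by omega)
    have key' : (q : ℚ) ^ (t * (k - t)) * (gauss q (n - k + t) t : ℚ)
        ≤ (gauss q n t : ℚ) := by exact_mod_cast key
    have hxe : x ^ (k - t) = ((q : ℚ) ^ (t * (k - t)))⁻¹ := by
      rw [hxdef, inv_pow, ← pow_mul]
    rw [div_le_iff₀ hgn, hxe, inv_mul_eq_div, le_div_iff₀ (by positivity), mul_comm]
    exact key'
  calc ∑ k ∈ Finset.Icc (t + 1) (n / 2),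
        (gauss q (n - k + t) t : ℚ) / (gauss q n t : ℚ)
      ≤ ∑ k ∈ Finset.Icc (t + 1) (n / 2), x ^ (k - t) := Finset.sum_le_sum step
    _ = ∑ j ∈ Finset.Icc 1 (n / 2 - t), x ^ j := by
        apply Finset.sum_nbij' (fun k => k - t) (fun j => j + t) <;>
          intros <;> simp_all [Finset.mem_Icc] <;> omega
    _ < 1 / ((q : ℚ) ^ t - 1) := by
        set N := n / 2 - t
        have hNI : Finset.Icc 1 N = Finset.Ico 1 (N + 1) := by
          rw [Finset.Ico_add_one_right_eq_Icc]
        rw [hNI, Finset.sum_Ico_eq_sub _ (by omega)]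
        have hg : ∑ j ∈ Finset.range (N + 1), x ^ j = (x ^ (N + 1) - 1) / (x - 1) :=
          geom_sum_eq (by linarith) _
        have hxN : (0 : ℚ) < x ^ (N + 1) := by positivity
        have h1 : ∑ j ∈ Finset.range 1, x ^ j = 1 := by simp
        have hne : ((q : ℚ) ^ t - 1) ≠ 0 := sub_ne_zero.mpr (ne_of_gt hQ)
        have hqt : ((q : ℚ) ^ t) ≠ 0 := by positivity
        have heq : 1 / (1 - x) = 1 / ((q : ℚ) ^ t - 1) + 1 := by
          rw [hxdef]; field_simp
          ring
        have h1x : (0 : ℚ) < 1 - x := by linarith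
        have hlt : (x ^ (N + 1) - 1) / (x - 1) < 1 / (1 - x) := by
          rw [show (x ^ (N + 1) - 1) / (x - 1) = (1 - x ^ (N + 1)) / (1 - x) by
            rw [← neg_sub x 1, ← neg_sub (x ^ (N + 1)) 1, neg_div_neg_eq]]
          rw [div_lt_div_iff₀ h1x h1x]
          nlinarith
        rw [hg, h1]
        linarith [heq ▸ hlt]
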